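/- Let p ∈ (1,∞), α ∈ (0,1/p), t₀ < t₁, and η ∈ (p/(1-pα), ∞]. Choose β with α + 1/η < β < 1/p (interpreting 1/η = 0 if η = ∞), and set f(t) = (t-t₀)^{-β} for t ∈ (t₀,t₁]. Then f ∈ L^p(t₀,t₁;ℝ), the fractional integral equals J^α f(t) = (Γ(1-β)/Γ(1+α-β)) (t-t₀)^{α-β} for t ∈ (t₀,t₁], and J^α f ∉ L^η(t₀,t₁;ℝ). -/

import Mathlib

open MeasureTheory
open scoped ENNReal

/-- Riemann–Liouville fractional integral of order `α` at `t₀`. -/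
noncomputable def RL (α t₀ : ℝ) (f : ℝ → ℝ) (t : ℝ) : ℝ :=
  (1 / Real.Gamma α) * ∫ s in t₀..t, (t - s) ^ (α - 1) * f s

/-- Real Beta integral identity, derived from the complex one. -/
lemma beta_real {u v : ℝ} (hu : 0 < u) (hv : 0 < v) :
    ∫ x in (0:ℝ)..1, x ^ (u - 1) * (1 - x) ^ (v - 1)
      = Real.Gamma u * Real.Gamma v / Real.Gamma (u + v) := by
  have hcast : ((∫ x in (0:ℝ)..1, x ^ (u - 1) * (1 - x) ^ (v - 1) : ℝ) : ℂ)
      = Complex.betaIntegral u v := by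
    rw [Complex.betaIntegral, ← intervalIntegral.integral_ofReal]
    apply intervalIntegral.integral_congr
    intro x hx
    rw [Set.uIcc_of_le zero_le_one] at hx
    have h1 : (0:ℝ) ≤ 1 - x := by linarith [hx.2]
    simp only [Complex.ofReal_mul]
    rw [Complex.ofReal_cpow hx.1, Complex.ofReal_cpow h1]
    push_cast
    ring
  have h := Complex.Gamma_mul_Gamma_eq_betaIntegral (s := (u:ℂ)) (t := (v:ℂ))
      (by simpa using hu) (by simpa using hv)
  rw [← hcast] at h
  have huv : ((u:ℂ) + v) = ((u + v : ℝ) : ℂ) := by push_cast; ring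
  rw [huv, Complex.Gamma_ofReal, Complex.Gamma_ofReal, Complex.Gamma_ofReal,
    ← Complex.ofReal_mul, ← Complex.ofReal_mul] at h
  have h' : Real.Gamma u * Real.Gamma v
      = Real.Gamma (u + v) * ∫ x in (0:ℝ)..1, x ^ (u - 1) * (1 - x) ^ (v - 1) := by
    exact_mod_cast h
  have hne : Real.Gamma (u + v) ≠ 0 := (Real.Gamma_pos_of_pos (by positivity)).ne'
  rw [eq_div_iff hne, h']
  ring

/-- Evaluation of the RL integral of a power function. -/
lemma RL_eval {α t₀ β t : ℝ} (hα : 0 < α) (hβ1 : β < 1) (ht : t₀ < t) :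
    RL α t₀ (fun s => (s - t₀) ^ (-β)) t
      = (Real.Gamma (1 - β) / Real.Gamma (1 + α - β)) * (t - t₀) ^ (α - β) := by
  set c := t - t₀ with hc
  have hc0 : 0 < c := by simp only [hc]; linarith
  have hsub := intervalIntegral.integral_comp_mul_add
      (f := fun s => (t - s) ^ (α - 1) * (s - t₀) ^ (-β)) (a := 0) (b := 1)
      (c := c) hc0.ne' t₀
  have he1 : c * 0 + t₀ = t₀ := by ring
  have he2 : c * 1 + t₀ = t := by rw [hc]; ring
  rw [he1, he2] at hsub
  -- hsub : ∫ x in 0..1, (t - (c*x + t₀))^(α-1) * (c*x + t₀ - t₀)^(-β)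
  --        = c⁻¹ • ∫ s in t₀..t, (t-s)^(α-1) * (s-t₀)^(-β)
  have hcong : (∫ x in (0:ℝ)..1, (t - (c * x + t₀)) ^ (α - 1) * (c * x + t₀ - t₀) ^ (-β))
      = ∫ x in (0:ℝ)..1, (c ^ (α - 1) * c ^ (-β)) * (x ^ (-β) * (1 - x) ^ (α - 1)) := by
    apply intervalIntegral.integral_congr
    intro x hx
    rw [Set.uIcc_of_le zero_le_one] at hx
    have h1 : (0:ℝ) ≤ 1 - x := by linarith [hx.2]
    have e1 : t - (c * x + t₀) = c * (1 - x) := by rw [hc]; ring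
    have e2 : c * x + t₀ - t₀ = c * x := by ring
    dsimp only
    rw [e1, e2, Real.mul_rpow hc0.le h1, Real.mul_rpow hc0.le hx.1]
    ring
  rw [hcong, intervalIntegral.integral_const_mul, smul_eq_mul] at hsub
  have hBeta : (∫ x in (0:ℝ)..1, x ^ (-β) * (1 - x) ^ (α - 1))
      = Real.Gamma (1 - β) * Real.Gamma α / Real.Gamma (1 + α - β) := by
    have hb := beta_real (u := 1 - β) (v := α) (by linarith) hα
    have e3 : (1:ℝ) - β - 1 = -β := by ring
    have e4 : (1:ℝ) - β + α = 1 + α - β := by ring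
    rw [e3, e4] at hb
    exact hb
  have hI := (inv_mul_eq_iff_eq_mul₀ hc0.ne').mp hsub.symm
  rw [RL, hI, hBeta]
  have hpow : c * (c ^ (α - 1) * c ^ (-β)) = c ^ (α - β) := by
    rw [show c * (c ^ (α - 1) * c ^ (-β)) = c ^ (1:ℝ) * (c ^ (α - 1) * c ^ (-β)) by
        rw [Real.rpow_one],
      ← Real.rpow_add hc0, ← Real.rpow_add hc0]
    congr 1
    ring
  have hΓα : Real.Gamma α ≠ 0 := (Real.Gamma_pos_of_pos hα).ne'
  have hΓ2 : Real.Gamma (1 + α - β) ≠ 0 := (Real.Gamma_pos_of_pos (by linarith)).ne'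
  rw [← hpow]
  field_simp

theorem stmt9 (p α t₀ t₁ β : ℝ) (η : ℝ≥0∞) (hp : 1 < p) (hα : 0 < α)
    (hαp : α < 1 / p) (ht : t₀ < t₁)
    (hη : ENNReal.ofReal (p / (1 - p * α)) < η)
    (hβ1 : β < 1 / p)
    (hβ2 : η ≠ ⊤ → α + 1 / η.toReal < β)
    (hβ3 : η = ⊤ → α < β)
    (f : ℝ → ℝ) (hf : f = fun t => (t - t₀) ^ (-β)) :
    MemLp f (ENNReal.ofReal p) (volume.restrict (Set.Ioc t₀ t₁)) ∧
    (∀ t ∈ Set.Ioc t₀ t₁,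
      RL α t₀ f t = (Real.Gamma (1 - β) / Real.Gamma (1 + α - β)) * (t - t₀) ^ (α - β)) ∧
    ¬ MemLp (RL α t₀ f) η (volume.restrict (Set.Ioc t₀ t₁)) := by
  have hp0 : (0:ℝ) < p := by linarith
  have h1p : 1 / p < 1 := by rw [div_lt_one hp0]; exact hp
  have hβlt1 : β < 1 := lt_trans hβ1 h1p
  have hαβ : α < β := by
    rcases eq_or_ne η ⊤ with h | h
    · exact hβ3 h
    · have := hβ2 h
      have h0 : 0 ≤ 1 / η.toReal := by positivity
      linarith
  have hβ0 : 0 < β := lt_trans hα hαβ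
  have hβp : β * p < 1 := by
    have h := mul_lt_mul_of_pos_right hβ1 hp0
    rwa [one_div, inv_mul_cancel₀ hp0.ne'] at h
  -- Part 2 (proved first so it can be used in part 3)
  have part2 : ∀ t ∈ Set.Ioc t₀ t₁,
      RL α t₀ f t = (Real.Gamma (1 - β) / Real.Gamma (1 + α - β)) * (t - t₀) ^ (α - β) := by
    intro t htmem
    rw [hf]
    exact RL_eval hα hβlt1 htmem.1
  refine ⟨?_, part2, ?_⟩
  · -- Membership of f in L^p
    rw [hf]
    have hmeas : AEStronglyMeasurable (fun t : ℝ => (t - t₀) ^ (-β))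
        (volume.restrict (Set.Ioc t₀ t₁)) :=
      ((measurable_id.sub_const t₀).pow measurable_const).aestronglyMeasurable
    have hiff := memLp_norm_rpow_iff (p := ENNReal.ofReal p) (q := ENNReal.ofReal p)
      hmeas (by simp [hp0]) (by simp)
    rw [ENNReal.div_self (by simp [hp0]) (by simp)] at hiff
    rw [← hiff, ENNReal.toReal_ofReal hp0.le, memLp_one_iff_integrable]
    have h0 : IntervalIntegrable (fun x : ℝ => x ^ (-(β * p))) volume 0 (t₁ - t₀) :=
      intervalIntegral.intervalIntegrable_rpow' (by linarith)
    have h1 := h0.comp_sub_right t₀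
    simp only [zero_add, sub_add_cancel] at h1
    have h3 : IntegrableOn (fun x : ℝ => (x - t₀) ^ (-(β * p))) (Set.Ioc t₀ t₁) volume :=
      (intervalIntegrable_iff_integrableOn_Ioc_of_le ht.le).mp h1
    refine h3.congr ?_
    rw [Filter.eventuallyEq_iff_exists_mem]
    refine ⟨Set.Ioc t₀ t₁, ?_, ?_⟩
    · rw [mem_ae_iff]
      rw [Measure.restrict_apply' measurableSet_Ioc]
      simp
    · intro x hx
      have hx0 : 0 < x - t₀ := by simp at hx; linarith [hx.1]
      have hpos : 0 < (x - t₀) ^ (-β) := Real.rpow_pos_of_pos hx0 _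
      simp only [Real.norm_eq_abs, abs_of_pos hpos]
      rw [← Real.rpow_mul hx0.le, neg_mul]
  · -- Non-membership of RL f in L^η
    intro hmem
    set C := Real.Gamma (1 - β) / Real.Gamma (1 + α - β) with hC
    have hC0 : 0 < C := div_pos (Real.Gamma_pos_of_pos (by linarith))
      (Real.Gamma_pos_of_pos (by linarith))
    obtain ⟨q, hq0, hqβ, hqle⟩ : ∃ q : ℝ, 0 < q ∧ 1 ≤ q * (β - α) ∧ ENNReal.ofReal q ≤ η := by
      rcases eq_or_ne η ⊤ with h | h
      · refine ⟨1 / (β - α), one_div_pos.mpr (by linarith), ?_, by simp [h]⟩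
        rw [div_mul_cancel₀]
        linarith
      · refine ⟨η.toReal, ?_, ?_, ?_⟩
        · refine ENNReal.toReal_pos ?_ h
          intro h0
          rw [h0] at hη
          exact (not_lt.mpr zero_le) hη
        · have hb := hβ2 h
          have htr : 0 < η.toReal := by
            refine ENNReal.toReal_pos ?_ h
            intro h0
            rw [h0] at hη
            exact (not_lt.mpr zero_le) hη
          have : 1 / η.toReal < β - α := by linarith
          calc (1:ℝ) = η.toReal * (1 / η.toReal) := by field_simp
          _ ≤ η.toReal * (β - α) := by nlinarith
        · rw [ENNReal.ofReal_toReal h]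
    have hmem' : MemLp (RL α t₀ f) (ENNReal.ofReal q) (volume.restrict (Set.Ioc t₀ t₁)) :=
      hmem.mono_exponent hqle
    have hint := hmem'.integrable_norm_rpow (by simp [hq0]) (by simp)
    rw [ENNReal.toReal_ofReal hq0.le] at hint
    -- transfer to the power function
    have hCq : (0:ℝ) < C ^ q := Real.rpow_pos_of_pos hC0 q
    have hae : (fun x => ‖RL α t₀ f x‖ ^ q) =ᵐ[volume.restrict (Set.Ioc t₀ t₁)]
        (fun x => C ^ q * (x - t₀) ^ ((α - β) * q)) := by
      rw [Filter.eventuallyEq_iff_exists_mem]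
      refine ⟨Set.Ioc t₀ t₁, ?_, ?_⟩
      · rw [mem_ae_iff, Measure.restrict_apply' measurableSet_Ioc]
        simp
      · intro x hx
        have hx0 : 0 < x - t₀ := by linarith [hx.1]
        dsimp only
        rw [part2 x hx]
        have hpos : 0 < C * (x - t₀) ^ (α - β) :=
          mul_pos hC0 (Real.rpow_pos_of_pos hx0 _)
        simp only [Real.norm_eq_abs, abs_of_pos hpos]
        rw [Real.mul_rpow hC0.le (Real.rpow_pos_of_pos hx0 _).le,
          ← Real.rpow_mul hx0.le]
    have hint2 : Integrable (fun x => C ^ q * (x - t₀) ^ ((α - β) * q))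
        (volume.restrict (Set.Ioc t₀ t₁)) := hint.congr hae
    have hint3 : Integrable (fun x => (x - t₀) ^ ((α - β) * q))
        (volume.restrict (Set.Ioc t₀ t₁)) := by
      have := hint2.const_mul (C ^ q)⁻¹
      refine this.congr (Filter.Eventually.of_forall fun x => ?_)
      field_simp
    have hint4 : IntervalIntegrable (fun x => (x - t₀) ^ ((α - β) * q)) volume t₀ t₁ :=
      (intervalIntegrable_iff_integrableOn_Ioc_of_le ht.le).mpr hint3
    have hint5 := hint4.comp_add_right t₀
    simp only [add_sub_cancel_right, sub_self] at hint5
    have hint6 : IntervalIntegrable (fun x : ℝ => x ^ ((α - β) * q)) volume 0 (t₁ - t₀) := hint5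
    have hint7 : IntegrableOn (fun x : ℝ => x ^ ((α - β) * q)) (Set.Ioo 0 (t₁ - t₀)) volume :=
      (intervalIntegrable_iff_integrableOn_Ioo_of_le (by linarith)).mp hint6
    have := (intervalIntegral.integrableOn_Ioo_rpow_iff (by linarith : (0:ℝ) < t₁ - t₀)).mp hint7
    nlinarith
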